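/- With the same setup (|X| = n = ks + m, m > 0), if the characteristic of F divides s-1, then for each block B = {a₁∪d,...,a_s∪d} of CR(X,k,s) the representing vectors of the s points p_{a₁∪d},...,p_{a_s∪d} are linearly dependent, while every proper subfamily of them is linearly independent; hence the points span a projective subspace of dimension exactly s-2. -/

import Mathlib

/-- The representing vector of the projective point `p_c`: for a subset `c` of
`X = {0,…,n-1}` it is `Σ_{j∈c} e j` when `0 ∉ c`, and (using `p_c = p_{X∖c}`)
`Σ_{j∈cᶜ} e j` when `0 ∈ c`. -/
def pVec {V : Type*} [AddCommMonoid V] {n : ℕ} [NeZero n]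
    (e : Fin n → V) (c : Finset (Fin n)) : V :=
  if (0 : Fin n) ∈ c then ∑ j ∈ cᶜ, e j else ∑ j ∈ c, e j

open Finset

/-- Let `|X| = n = ks + m` with `m > 0`, and let `B = {a₁∪d,…,a_s∪d}` be a block of
`CR(X,k,s)` with `0 ∈ d`. If `char F ∣ (s-1)`, then the representing vectors of the
`s` points `p_{a₁∪d},…,p_{a_s∪d}` are linearly dependent, while every proper subfamily
is linearly independent; hence the points span a projective subspace of dimension
exactly `s-2` (vector dimension `s-1`). -/
theorem block_dependent_of_char_dvd {F V : Type*} [Field F] [AddCommGroup V]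
    [Module F V] (k s m n : ℕ) (hk : 0 < k) (hs : 2 ≤ s) (hm : 0 < m)
    (hn : n = k * s + m) [NeZero n]
    (e : Fin n → V)
    (hli : LinearIndependent F (fun i : {i : Fin n // i ≠ 0} => e i.1))
    (h0 : e 0 = ∑ i ∈ Finset.univ.erase (0 : Fin n), e i)
    (a : Fin s → Finset (Fin n)) (d : Finset (Fin n))
    (hd : d.card = m) (h0d : (0 : Fin n) ∈ d)
    (hcard : ∀ i, (a i).card = k)
    (hdd : ∀ i, Disjoint (a i) d)
    (hdisj : ∀ i j, i ≠ j → Disjoint (a i) (a j))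
    (hchar : ((s - 1 : ℕ) : F) = 0) :
    ¬ LinearIndependent F (fun i : Fin s => pVec e (a i ∪ d)) ∧
      (∀ t : Finset (Fin s), t ≠ Finset.univ →
        LinearIndependent F (fun i : t => pVec e (a i ∪ d))) ∧
      Module.finrank F
          ↥(Submodule.span F (Set.range fun i : Fin s => pVec e (a i ∪ d))) = s - 1 := by
  classical
  set w : Fin s → V := fun j => ∑ x ∈ a j, e x with hwdef
  set W : V := ∑ j, w j with hWdef
  set v : Fin s → V := fun i => ∑ j ∈ univ.erase i, w j with hvdef
  have h0a : ∀ j, (0 : Fin n) ∉ a j := fun j h => Finset.disjoint_left.mp (hdd j) h h0d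
  -- the aᵢ together with d cover everything
  have hcover : ∀ x : Fin n, x ∈ d ∨ ∃ j, x ∈ a j := by
    have hbd : Disjoint ((univ : Finset (Fin s)).biUnion a) d := by
      rw [Finset.disjoint_biUnion_left]; exact fun j _ => hdd j
    have hcardb : ((univ : Finset (Fin s)).biUnion a).card = k * s := by
      rw [Finset.card_biUnion (fun i _ j _ hij => hdisj i j hij)]
      simp [hcard, mul_comm]
    have huniv : (univ : Finset (Fin s)).biUnion a ∪ d = univ := by
      apply Finset.eq_univ_of_card
      rw [Finset.card_union_of_disjoint hbd, hcardb, hd, Fintype.card_fin, hn]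
    intro x
    have hx : x ∈ (univ : Finset (Fin s)).biUnion a ∪ d := by
      rw [huniv]; exact mem_univ x
    rcases Finset.mem_union.mp hx with h | h
    · right; rcases Finset.mem_biUnion.mp h with ⟨j, _, hj⟩; exact ⟨j, hj⟩
    · left; exact h
  -- the complement of aᵢ ∪ d
  have hcompl : ∀ i, (a i ∪ d)ᶜ = (univ.erase i).biUnion a := by
    intro i; ext x
    simp only [Finset.mem_compl, Finset.mem_union, Finset.mem_biUnion, Finset.mem_erase,
      Finset.mem_univ, and_true, true_and]
    constructor
    · intro hx
      push_neg at hx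
      rcases hcover x with h | ⟨j, hj⟩
      · exact absurd h hx.2
      · exact ⟨j, fun hji => hx.1 (hji ▸ hj), hj⟩
    · rintro ⟨j, hji, hj⟩
      push_neg
      exact ⟨fun hxi => Finset.disjoint_left.mp (hdisj j i hji) hj hxi,
        fun hxd => Finset.disjoint_left.mp (hdd j) hj hxd⟩
  -- the representing vectors
  have hv : ∀ i, pVec e (a i ∪ d) = v i := by
    intro i
    rw [pVec, if_pos (Finset.mem_union_right _ h0d), hcompl i,
      Finset.sum_biUnion (fun j _ j' _ hjj' => hdisj j j' hjj')]
  -- linear independence criterion for e-coefficients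
  have hcoeff : ∀ g : Fin n → F, g 0 = 0 → (∑ x, g x • e x) = 0 → ∀ x, g x = 0 := by
    intro g hg0 hsum x
    by_cases hx : x = 0
    · rw [hx, hg0]
    · refine Fintype.linearIndependent_iff.mp hli (fun i => g i.1) ?_ ⟨x, hx⟩
      have h1 : ∑ i : {i : Fin n // i ≠ 0}, g i.1 • e i.1
          = ∑ y ∈ (univ : Finset (Fin n)).erase 0, g y • e y := by
        rw [Finset.sum_subtype (p := fun i : Fin n => i ≠ 0)
          ((univ : Finset (Fin n)).erase 0) (fun y => by simp) (fun y => g y • e y)]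
      rw [h1, Finset.sum_erase _ (by rw [hg0, zero_smul]), hsum]
  -- the w's are linearly independent (coefficient form)
  have hwind : ∀ c : Fin s → F, (∑ j, c j • w j) = 0 → ∀ j, c j = 0 := by
    intro c hc j
    set g : Fin n → F := fun x => ∑ j', if x ∈ a j' then c j' else 0 with hgdef
    have hg0 : g 0 = 0 := by simp [hgdef, h0a]
    have hgsum : (∑ x, g x • e x) = 0 := by
      have h1 : ∀ x, g x • e x = ∑ j', if x ∈ a j' then c j' • e x else 0 := by
        intro x
        rw [hgdef]
        simp only [Finset.sum_smul]
        congr 1 with j'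
        split <;> simp
      calc (∑ x, g x • e x) = ∑ x, ∑ j', if x ∈ a j' then c j' • e x else 0 := by
            simp only [h1]
        _ = ∑ j', ∑ x, (if x ∈ a j' then c j' • e x else 0) := Finset.sum_comm
        _ = ∑ j', ∑ x ∈ a j', c j' • e x := by
            congr 1 with j'
            rw [Finset.sum_ite_mem, Finset.univ_inter]
        _ = ∑ j', c j' • w j' := by
            congr 1 with j'
            rw [hwdef, Finset.smul_sum]
        _ = 0 := hc
    obtain ⟨x₀, hx₀⟩ := Finset.card_pos.mp (by rw [hcard j]; exact hk)
    have hgx : g x₀ = c j := by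
      show (∑ j' : Fin s, if x₀ ∈ a j' then c j' else 0) = c j
      rw [Finset.sum_eq_single j
        (fun j' _ hj' => if_neg (fun hx => Finset.disjoint_left.mp (hdisj j' j hj') hx hx₀))
        (fun h => absurd (mem_univ j) h), if_pos hx₀]
    rw [← hgx]
    exact hcoeff g hg0 hgsum x₀
  -- v i = W - w i
  have hvW : ∀ i, v i = W - w i := by
    intro i
    rw [hvdef]
    exact Finset.sum_erase_eq_sub (mem_univ i)
  -- sum of all v's is zero
  have hWzero : (s - 1) • W = 0 := by
    rw [← Nat.cast_smul_eq_nsmul F, hchar, zero_smul]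
  have hv0 : (∑ i, v i) = 0 := by
    have h1 : (∑ i : Fin s, v i) = s • W - W := by
      simp only [hvW]
      rw [Finset.sum_sub_distrib, Finset.sum_const, Finset.card_univ, Fintype.card_fin, hWdef]
    have h2 : s • W = (s - 1) • W + W := by
      conv_lhs => rw [show s = (s - 1) + 1 by omega]
      rw [succ_nsmul]
    rw [h1, h2, hWzero, zero_add, sub_self]
  -- Part A: not linearly independent
  have hA : ¬ LinearIndependent F (fun i : Fin s => pVec e (a i ∪ d)) := by
    intro h
    have h1 : (fun _ : Fin s => (1 : F)) ⟨0, by omega⟩ = 0 := by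
      refine Fintype.linearIndependent_iff.mp h (fun _ => 1) ?_ ⟨0, by omega⟩
      simp only [one_smul, hv]
      exact hv0
    exact one_ne_zero h1
  -- Part B: proper subfamilies are independent
  have hB : ∀ t : Finset (Fin s), t ≠ Finset.univ →
      LinearIndependent F (fun i : t => pVec e (a i ∪ d)) := by
    intro t ht
    rw [Fintype.linearIndependent_iff]
    intro g hg i
    set g' : Fin s → F := fun j => if h : j ∈ t then g ⟨j, h⟩ else 0 with hg'def
    have hg'sum : (∑ j, g' j • v j) = 0 := by
      have h1 : (∑ j, g' j • v j) = ∑ j ∈ t, g' j • v j := by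
        refine (Finset.sum_subset (Finset.subset_univ t) (fun j _ hj => ?_)).symm
        rw [hg'def]; simp [hj]
      have h2 : (∑ j ∈ t, g' j • v j) = ∑ i : t, g (i : t) • v i := by
        rw [← Finset.sum_coe_sort t (fun j => g' j • v j)]
        congr 1 with i
        rw [hg'def]; simp [i.2]
      rw [h1, h2, ← hg]
      simp only [hv]
    have hc : ∀ j, (∑ j', g' j') - g' j = 0 := by
      apply hwind
      have h3 : (∑ j, ((∑ j', g' j') - g' j) • w j) = ∑ j, g' j • v j := by
        simp only [hvW, hWdef, sub_smul, smul_sub, Finset.sum_sub_distrib,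
          Finset.sum_smul, Finset.smul_sum]
        congr 1
        exact Finset.sum_comm
      rw [h3, hg'sum]
    obtain ⟨j₀, hj₀⟩ : ∃ j₀, j₀ ∉ t := by
      by_contra h
      push_neg at h
      exact ht (Finset.eq_univ_iff_forall.mpr h)
    have hC : (∑ j', g' j') = 0 := by
      have := hc j₀
      rw [hg'def] at this ⊢
      simpa [hj₀] using this
    have := hc i
    rw [hC, hg'def] at this
    simpa [i.2, sub_eq_zero] using this.symm
  refine ⟨hA, hB, ?_⟩
  -- Part C: finrank of span = s - 1
  set i₀ : Fin s := ⟨s - 1, by omega⟩ with hi₀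
  set t₀ : Finset (Fin s) := univ.erase i₀ with ht₀def
  have ht₀ : t₀ ≠ univ := by
    intro h
    have hmem : i₀ ∈ t₀ := by rw [h]; exact mem_univ i₀
    rw [ht₀def] at hmem
    exact Finset.notMem_erase i₀ univ hmem
  have hliB : LinearIndependent F (fun i : t₀ => v (i : Fin s)) := by
    have := hB t₀ ht₀
    simpa only [hv] using this
  have hspan : Submodule.span F (Set.range fun i : Fin s => pVec e (a i ∪ d))
      = Submodule.span F (Set.range fun i : t₀ => v (i : Fin s)) := by
    apply le_antisymm
    · rw [Submodule.span_le]
      rintro _ ⟨i, rfl⟩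
      show pVec e (a i ∪ d) ∈ _
      rw [hv]
      by_cases hi : i = i₀
      · have hsplit : v i₀ + ∑ j ∈ t₀, v j = ∑ j, v j := Finset.add_sum_erase univ v (mem_univ i₀)
        have : v i₀ = -∑ j ∈ t₀, v j := by
          rw [eq_neg_iff_add_eq_zero, ← hv0, hsplit]
        rw [hi, this]
        refine neg_mem (Submodule.sum_mem _ fun j hj => Submodule.subset_span ⟨⟨j, hj⟩, rfl⟩)
      · exact Submodule.subset_span ⟨⟨i, by simp [ht₀def, hi]⟩, rfl⟩
    · rw [Submodule.span_le]
      rintro _ ⟨i, rfl⟩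
      exact Submodule.subset_span ⟨(i : Fin s), hv i⟩
  rw [hspan, finrank_span_eq_card hliB, Fintype.card_coe, ht₀def,
    Finset.card_erase_of_mem (mem_univ i₀), Finset.card_univ, Fintype.card_fin]
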